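/- Let X ⊆ ℝ^m be a nonempty closed convex set, let x̃ ∈ ℝ^m, let x_P be the Euclidean orthogonal projection of x̃ onto X, let ĝ ∈ ℝ^m, and define ℓ̃ : ℝ^m → ℝ by ℓ̃(z) = (1/2)(⟨ĝ, z⟩ + ‖ĝ‖ · dist(z, X)). Then for every x ∈ X one has ⟨ĝ, x_P − x⟩ ≤ 2(ℓ̃(x̃) − ℓ̃(x)). Consequently, if ℓ : ℝ^m → ℝ is convex and ĝ is a subgradient of ℓ at x_P, then ℓ(x_P) − ℓ(x) ≤ 2(ℓ̃(x̃) − ℓ̃(x)) for every x ∈ X. -/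
import Mathlib


open scoped RealInnerProductSpace

/-- for the surrogate loss `Lt(z) = (1/2)(⟨ĝ, z⟩ + ‖ĝ‖ dist(z, X))` one has
`⟨ĝ, xP − x⟩ ≤ 2 (Lt x̃ − Lt x)` for all `x ∈ X`; consequently, if `ĝ` is a subgradient at
`xP` of a convex function `L`, then `L xP − L x ≤ 2 (Lt x̃ − Lt x)` for all `x ∈ X`. -/
theorem surrogate_regret_reduction {m : ℕ}
    (X : Set (EuclideanSpace ℝ (Fin m)))
    (hXne : X.Nonempty) (hXcl : IsClosed X) (hXconv : Convex ℝ X)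
    (xt xP ghat : EuclideanSpace ℝ (Fin m))
    -- `xP` is the Euclidean orthogonal projection of `xt` onto `X`
    (hproj : xP ∈ X ∧ ∀ z ∈ X, ‖xt - xP‖ ≤ ‖xt - z‖)
    (Lt : EuclideanSpace ℝ (Fin m) → ℝ)
    (hLt : Lt = fun z => (2 : ℝ)⁻¹ * (⟪ghat, z⟫ + ‖ghat‖ * Metric.infDist z X)) :
    (∀ x ∈ X, ⟪ghat, xP - x⟫ ≤ 2 * (Lt xt - Lt x)) ∧
      ∀ L : EuclideanSpace ℝ (Fin m) → ℝ, ConvexOn ℝ Set.univ L →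
        (∀ z, L xP + ⟪ghat, z - xP⟫ ≤ L z) →
        ∀ x ∈ X, L xP - L x ≤ 2 * (Lt xt - Lt x) := by
  obtain ⟨hPmem, hPmin⟩ := hproj
  -- infDist xt X = ‖xt - xP‖
  have hd : Metric.infDist xt X = ‖xt - xP‖ := by
    apply le_antisymm
    · simpa [dist_eq_norm] using Metric.infDist_le_dist_of_mem (x := xt) hPmem
    · by_contra h
      push_neg at h
      obtain ⟨y, hy, hlt⟩ := (Metric.infDist_lt_iff hXne).mp h
      have : ‖xt - y‖ < ‖xt - xP‖ := by simpa [dist_eq_norm] using hlt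
      exact absurd (hPmin y hy) this.not_ge
  have key : ∀ x ∈ X, ⟪ghat, xP - x⟫ ≤ 2 * (Lt xt - Lt x) := by
    intro x hx
    have hdx : Metric.infDist x X = 0 := Metric.infDist_zero_of_mem hx
    have hcs : ⟪ghat, xP - xt⟫ ≤ ‖ghat‖ * ‖xt - xP‖ := by
      calc ⟪ghat, xP - xt⟫ ≤ ‖ghat‖ * ‖xP - xt‖ := real_inner_le_norm _ _
        _ = ‖ghat‖ * ‖xt - xP‖ := by rw [norm_sub_rev]
    have : ⟪ghat, xP - x⟫ = ⟪ghat, xP - xt⟫ + ⟪ghat, xt - x⟫ := by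
      rw [← inner_add_right]; congr 1; abel
    rw [this, hLt]
    simp only [hdx, hd]
    have h2 : ⟪ghat, xt - x⟫ = ⟪ghat, xt⟫ - ⟪ghat, x⟫ := inner_sub_right _ _ _
    nlinarith [hcs, h2]
  refine ⟨key, fun L _ hsub x hx => ?_⟩
  have := hsub x
  have h1 : L xP - L x ≤ ⟪ghat, xP - x⟫ := by
    have h2 : ⟪ghat, x - xP⟫ = -⟪ghat, xP - x⟫ := by
      rw [← inner_neg_right]; congr 1; abel
    linarith [hsub x, h2 ▸ hsub x]
  exact h1.trans (key x hx)
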